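/- Let X be a real Hilbert space and let (f_j)_{j ∈ J} be a finite nonempty family of unit vectors in X. For each j let H_j = {x ∈ X : ⟨f_j, x⟩ = 0}, and let N = ∩_{j ∈ J} H_j. Then there exists a constant μ̄ > 0 such that for all x ∈ X, max_{j ∈ J} dist(x, H_j) ≥ μ̄ · dist(x, N). (Lemma 5.5: linear regularity for a finite system of hyperplanes through the origin.) -/

import Mathlib

open scoped RealInnerProductSpace

lemma infDist_hyperplane {X : Type*} [NormedAddCommGroup X] [InnerProductSpace ℝ X]
    (g x : X) (hg : ‖g‖ = 1) :
    Metric.infDist x {y : X | ⟪g, y⟫ = (0 : ℝ)} = |⟪g, x⟫| := by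
  apply le_antisymm
  · have hmem : x - ⟪g, x⟫ • g ∈ {y : X | ⟪g, y⟫ = (0 : ℝ)} := by
      simp only [Set.mem_setOf_eq, inner_sub_right, real_inner_smul_right,
        real_inner_self_eq_norm_sq, hg]
      ring
    calc Metric.infDist x {y : X | ⟪g, y⟫ = (0 : ℝ)} ≤ dist x (x - ⟪g, x⟫ • g) :=
          Metric.infDist_le_dist_of_mem hmem
      _ = |⟪g, x⟫| := by
          rw [dist_eq_norm, sub_sub_cancel, norm_smul, hg, mul_one, Real.norm_eq_abs]
  · haveI : Nonempty {y : X | ⟪g, y⟫ = (0 : ℝ)} := ⟨⟨0, by simp⟩⟩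
    rw [Metric.infDist_eq_iInf]
    refine le_ciInf fun y => ?_
    have hy : ⟪g, (y : X)⟫ = (0 : ℝ) := y.2
    calc |⟪g, x⟫| = |⟪g, x - y⟫| := by
          simp [inner_sub_right, hy]
      _ ≤ ‖g‖ * ‖x - (y : X)‖ := abs_real_inner_le_norm g (x - y)
      _ = dist x (y : X) := by rw [hg, one_mul, dist_eq_norm]

/-- Lemma 5.5: linear regularity for a finite system of hyperplanes through the
origin: there is `μ̄ > 0` with `max_j dist(x, H_j) ≥ μ̄ · dist(x, ∩_j H_j)` for all
`x`. -/
theorem linear_regularity_hyperplanes {X : Type*} [NormedAddCommGroup X]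
    [InnerProductSpace ℝ X] [CompleteSpace X] {J : Type*} [Fintype J] [Nonempty J]
    (f : J → X) (hf : ∀ j, ‖f j‖ = 1) :
    ∃ μ > (0 : ℝ), ∀ x : X,
      μ * Metric.infDist x (⋂ j, {y : X | ⟪f j, y⟫ = (0 : ℝ)}) ≤
        ⨆ j, Metric.infDist x {y : X | ⟪f j, y⟫ = (0 : ℝ)} := by
  set V : Submodule ℝ X := Submodule.span ℝ (Set.range f) with hV
  have hfd : FiniteDimensional ℝ V := by
    apply FiniteDimensional.span_of_finite
    exact Set.finite_range f
  have hfmem : ∀ j, f j ∈ V := fun j => Submodule.subset_span (Set.mem_range_self j)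
  -- the linear map v ↦ (⟪f j, v⟫)_j on V
  set T : V →ₗ[ℝ] (J → ℝ) :=
    { toFun := fun v => fun j => ⟪f j, (v : X)⟫
      map_add' := by intro a b; funext j; simp [inner_add_right]
      map_smul' := by intro c a; funext j; simp [inner_smul_right] } with hT
  have hTker : LinearMap.ker T = ⊥ := by
    rw [LinearMap.ker_eq_bot']
    intro v hv
    have hvV : (v : X) ∈ Vᗮ := by
      rw [Submodule.mem_orthogonal]
      intro u hu
      induction hu using Submodule.span_induction with
      | mem u hu =>
        obtain ⟨j, rfl⟩ := hu
        exact congrFun hv j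
      | zero => simp
      | add a b _ _ ha hb => simp [inner_add_left, ha, hb]
      | smul c a _ ha => simp [inner_smul_left, ha]
    have := Submodule.inner_right_of_mem_orthogonal v.2 hvV
    ext
    exact inner_self_eq_zero.mp this
  obtain ⟨K, hK0, hK⟩ := T.exists_antilipschitzWith hTker
  refine ⟨(K : ℝ)⁻¹, by positivity, fun x => ?_⟩
  set v : X := (V.orthogonalProjectionOnto x : X) with hv
  have hw : x - v ∈ Vᗮ := Submodule.sub_starProjection_mem_orthogonal x
  have hinner : ∀ j, ⟪f j, x - v⟫ = (0 : ℝ) :=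
    fun j => Submodule.inner_right_of_mem_orthogonal (hfmem j) hw
  have hsup_nonneg : (0 : ℝ) ≤ ⨆ j, |⟪f j, x⟫| :=
    Real.iSup_nonneg fun j => abs_nonneg _
  have hbdd : BddAbove (Set.range fun j => |⟪f j, x⟫|) := Set.Finite.bddAbove (Set.finite_range _)
  -- key estimate
  have hkey : (K : ℝ)⁻¹ * ‖v‖ ≤ ⨆ j, |⟪f j, x⟫| := by
    have h1 : ‖(V.orthogonalProjectionOnto x : V)‖ ≤ K * ‖T (V.orthogonalProjectionOnto x)‖ :=
      hK.le_mul_norm (map_zero T) _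
    have h2 : ‖T (V.orthogonalProjectionOnto x)‖ ≤ ⨆ j, |⟪f j, x⟫| := by
      rw [pi_norm_le_iff_of_nonneg hsup_nonneg]
      intro j
      have : ⟪f j, v⟫ = ⟪f j, x⟫ := by
        have := hinner j
        rw [inner_sub_right] at this
        linarith
      calc ‖T (V.orthogonalProjectionOnto x) j‖ = |⟪f j, x⟫| := by
            simp only [hT, LinearMap.coe_mk, AddHom.coe_mk, Real.norm_eq_abs, ← hv, this]
        _ ≤ ⨆ j, |⟪f j, x⟫| := le_ciSup hbdd j
    have hvnorm : ‖v‖ = ‖(V.orthogonalProjectionOnto x : V)‖ := rfl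
    rw [inv_mul_le_iff₀ (by exact_mod_cast hK0)]
    calc ‖v‖ ≤ K * ‖T (V.orthogonalProjectionOnto x)‖ := by rw [hvnorm]; exact h1
      _ ≤ K * ⨆ j, |⟪f j, x⟫| := by
          exact mul_le_mul_of_nonneg_left h2 (by positivity)
  have hdist : Metric.infDist x (⋂ j, {y : X | ⟪f j, y⟫ = (0 : ℝ)}) ≤ ‖v‖ := by
    have hmem : x - v ∈ ⋂ j, {y : X | ⟪f j, y⟫ = (0 : ℝ)} := by
      simp only [Set.mem_iInter, Set.mem_setOf_eq]
      exact hinner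
    calc Metric.infDist x (⋂ j, {y : X | ⟪f j, y⟫ = (0 : ℝ)}) ≤ dist x (x - v) :=
          Metric.infDist_le_dist_of_mem hmem
      _ = ‖v‖ := by rw [dist_eq_norm, sub_sub_cancel]
  have hsupeq : (⨆ j, Metric.infDist x {y : X | ⟪f j, y⟫ = (0 : ℝ)}) = ⨆ j, |⟪f j, x⟫| :=
    iSup_congr fun j => infDist_hyperplane (f j) x (hf j)
  rw [hsupeq]
  calc (K : ℝ)⁻¹ * Metric.infDist x (⋂ j, {y : X | ⟪f j, y⟫ = (0 : ℝ)})
      ≤ (K : ℝ)⁻¹ * ‖v‖ := mul_le_mul_of_nonneg_left hdist (by positivity)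
    _ ≤ ⨆ j, |⟪f j, x⟫| := hkey
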